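/- Let Σ be a set of prime numbers, let (Q_q)_{q∈Σ} be a family of LCA groups such that each Q_q is a topological vector space over ℚ_q, and let Z_q be a compact open subgroup of Q_q for each q ∈ Σ. Then there exists a family (n_q)_{q∈Σ} of nonnegative integers such that the restricted product ∏'_{q∈Σ}(Q_q, Z_q) is isomorphic as a topological group to the restricted product ∏'_{q∈Σ}(ℚ_q^{n_q}, ℤ_q^{n_q}). In particular, up to isomorphism the restricted product does not depend on the choice of the compact open subgroups Z_q. -/

import Mathlib

open Filter Set

instance (p : Nat.Primes) : Fact (p : ℕ).Prime := ⟨p.2⟩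

/-- The additive subgroup `ℤ_p` of `ℚ_p`. -/
def padicIntAddSubgroup (p : Nat.Primes) : AddSubgroup ℚ_[(p : ℕ)] where
  carrier := {x | ‖x‖ ≤ 1}
  zero_mem' := by
    show ‖(0 : ℚ_[(p : ℕ)])‖ ≤ 1
    simp
  add_mem' := by
    intro a b ha hb
    show ‖a + b‖ ≤ 1
    exact le_trans (Padic.nonarchimedean _ _) (max_le ha hb)
  neg_mem' := by
    intro a ha
    show ‖-a‖ ≤ 1
    simpa using ha

/-- The restricted product `∏'_i (G i, H i)` of abelian topological groups with respect to
subgroups `H i`, as a subgroup of the full product: the set of elements whose `i`-th coordinate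
lies in `H i` for all but finitely many `i`. -/
def restrictedSubgroup {ι : Type*} (G : ι → Type*) [∀ i, AddCommGroup (G i)]
    (H : (i : ι) → AddSubgroup (G i)) : AddSubgroup ((i : ι) → G i) where
  carrier := {x | ∀ᶠ i in cofinite, x i ∈ H i}
  zero_mem' := by
    show ∀ᶠ i in cofinite, (0 : (i : ι) → G i) i ∈ H i
    exact Eventually.of_forall fun i => (H i).zero_mem
  add_mem' := by
    intro a b ha hb
    have ha' : ∀ᶠ i in cofinite, a i ∈ H i := ha
    have hb' : ∀ᶠ i in cofinite, b i ∈ H i := hb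
    exact (ha'.and hb').mono fun i h => (H i).add_mem h.1 h.2
  neg_mem' := by
    intro a ha
    have ha' : ∀ᶠ i in cofinite, a i ∈ H i := ha
    exact ha'.mono fun i h => (H i).neg_mem h

/-- The restricted product, as a type. -/
def RestrictedProductAdd {ι : Type*} (G : ι → Type*) [∀ i, AddCommGroup (G i)]
    (H : (i : ι) → AddSubgroup (G i)) := ↥(restrictedSubgroup G H)

instance {ι : Type*} (G : ι → Type*) [∀ i, AddCommGroup (G i)]
    (H : (i : ι) → AddSubgroup (G i)) : AddCommGroup (RestrictedProductAdd G H) :=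
  inferInstanceAs (AddCommGroup ↥(restrictedSubgroup G H))

/-- The underlying element of the full product. -/
def RestrictedProductAdd.val {ι : Type*} (G : ι → Type*) [∀ i, AddCommGroup (G i)]
    (H : (i : ι) → AddSubgroup (G i)) : RestrictedProductAdd G H → ((i : ι) → G i) :=
  Subtype.val

/-- The restricted product topology: generated by the open boxes `∏ U_i` with every `U_i` open
and `U_i = H i` for all but finitely many `i`. -/
instance {ι : Type*} (G : ι → Type*) [∀ i, AddCommGroup (G i)] [∀ i, TopologicalSpace (G i)]
    (H : (i : ι) → AddSubgroup (G i)) : TopologicalSpace (RestrictedProductAdd G H) :=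
  TopologicalSpace.generateFrom
    {s | ∃ U : (i : ι) → Set (G i), (∀ i, IsOpen (U i)) ∧
      (∀ᶠ i in cofinite, U i = (H i : Set (G i))) ∧
      s = RestrictedProductAdd.val G H ⁻¹' Set.pi univ U}

/-- The restricted product `∏'_{q∈Σ} (ℚ_q^{n_q}, ℤ_q^{n_q})`. -/
abbrev PadicRestrictedProduct (P : Set Nat.Primes) (n : ↥P → ℕ) :=
  RestrictedProductAdd (fun q : ↥P => Fin (n q) → ℚ_[(q.1 : ℕ)])
    (fun q => AddSubgroup.pi Set.univ fun _ => padicIntAddSubgroup q.1)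


section Aux
open Metric

variable {p : ℕ} [Fact p.Prime] {Q : Type*} [AddCommGroup Q] [TopologicalSpace Q]
  [IsTopologicalAddGroup Q] [Module ℚ_[p] Q] [ContinuousSMul ℚ_[p] Q]

omit [IsTopologicalAddGroup Q] in
lemma aux_pow_smul {C U : Set Q} (hC : IsCompact C) (hU : U ∈ nhds (0 : Q)) :
    ∃ k : ℕ, ∀ x ∈ C, ((p : ℚ_[p]) ^ k) • x ∈ U := by
  have hcont : ∀ z : Q, ∃ V ∈ nhds (0 : ℚ_[p]), ∃ W ∈ nhds z,
      ∀ c ∈ V, ∀ w ∈ W, c • w ∈ U := by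
    intro z
    have h : Tendsto (fun cz : ℚ_[p] × Q => cz.1 • cz.2) (nhds (0, z)) (nhds ((0 : ℚ_[p]) • z)) :=
      (continuous_smul.tendsto _)
    rw [zero_smul] at h
    have := h hU
    rw [mem_map, nhds_prod_eq, mem_prod_iff] at this
    obtain ⟨V, hV, W, hW, hVW⟩ := this
    exact ⟨V, hV, W, hW, fun c hc w hw => hVW (mk_mem_prod hc hw)⟩
  choose V hV W hW hVW using hcont
  obtain ⟨t, -, htC⟩ := hC.elim_nhds_subcover W (fun z _ => hW z)
  by_cases ht : t.Nonempty
  · have hVt : (⋂ z ∈ t, V z) ∈ nhds (0 : ℚ_[p]) := by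
      exact (Filter.biInter_finset_mem t).mpr fun z _ => hV z
    have htend : Tendsto (fun k : ℕ => (p : ℚ_[p]) ^ k) atTop (nhds 0) :=
      tendsto_pow_atTop_nhds_zero_of_norm_lt_one Padic.norm_p_lt_one
    obtain ⟨k, hk⟩ := (htend.eventually_mem hVt).exists
    refine ⟨k, fun x hx => ?_⟩
    obtain ⟨z, hz, hxz⟩ := Set.mem_iUnion₂.mp (htC hx)
    exact hVW z _ (by simpa using Set.mem_iInter₂.mp hk z hz) x hxz
  · refine ⟨0, fun x hx => absurd (htC hx) ?_⟩
    simp [Finset.not_nonempty_iff_eq_empty.mp ht]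

lemma aux_fd [T2Space Q] (Z : AddSubgroup Q) (hZc : IsCompact (Z : Set Q))
    (hZo : IsOpen (Z : Set Q)) : FiniteDimensional ℚ_[p] Q := by
  have hp0 : (p : ℚ_[p]) ≠ 0 := by
    exact_mod_cast (Nat.cast_ne_zero (R := ℚ_[p])).mpr (Fact.out : p.Prime).ne_zero
  set pZ : Set Q := ((p : ℚ_[p]) • ·) '' (Z : Set Q) with hpZ
  have hpZo : IsOpen pZ := (Homeomorph.smulOfNeZero (p : ℚ_[p]) hp0).isOpen_image.mpr hZo
  have h0pZ : (0 : Q) ∈ pZ := ⟨0, Z.zero_mem, by simp⟩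
  obtain ⟨t, htZ, hcov⟩ := hZc.elim_nhds_subcover (fun x => (x + ·) '' pZ)
    (fun x _ => ((Homeomorph.addLeft x).isOpen_image.mpr hpZo).mem_nhds ⟨0, h0pZ, by simp⟩)
  set F := Submodule.span ℚ_[p] (t : Set Q) with hF
  haveI : FiniteDimensional ℚ_[p] F := FiniteDimensional.span_of_finite _ t.finite_toSet
  have hFc : IsClosed (F : Set Q) := Submodule.closed_of_finiteDimensional F
  have key : ∀ z ∈ Z, ∀ k : ℕ, ∃ f ∈ F, ∃ w ∈ Z, z = f + ((p : ℚ_[p]) ^ k) • w := by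
    intro z hz k
    induction k with
    | zero => exact ⟨0, F.zero_mem, z, hz, by simp⟩
    | succ k ih =>
      obtain ⟨f, hf, w, hw, hzw⟩ := ih
      obtain ⟨x, hx, hwx⟩ := Set.mem_iUnion₂.mp (hcov hw)
      obtain ⟨y, hy, hxyw⟩ := hwx
      obtain ⟨w', hw', rfl⟩ := hy
      refine ⟨f + ((p : ℚ_[p]) ^ k) • x, F.add_mem hf (F.smul_mem _
        (Submodule.subset_span hx)), w', hw', ?_⟩
      have hwxy : w = x + (p : ℚ_[p]) • w' := hxyw.symm
      rw [hzw, hwxy, smul_add, add_assoc, smul_smul, ← pow_succ]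
  have hZF : (Z : Set Q) ⊆ F := by
    intro z hz
    rw [← hFc.closure_eq]
    rw [mem_closure_iff_nhds]
    intro U hU
    have hVn : (fun y => z - y) ⁻¹' U ∈ nhds (0 : Q) := by
      have : Continuous fun y : Q => z - y := continuous_const.sub continuous_id
      have := this.continuousAt (x := (0 : Q))
      apply this
      simpa using hU
    obtain ⟨k, hk⟩ := aux_pow_smul (p := p) hZc hVn
    obtain ⟨f, hf, w, hw, hzw⟩ := key z hz k
    refine ⟨f, ?_, hf⟩
    have : f = z - ((p : ℚ_[p]) ^ k) • w := by rw [hzw, add_sub_cancel_right]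
    rw [this]
    exact hk w hw
  have hFtop : F = ⊤ := by
    rw [eq_top_iff]
    intro x _
    have htendx : Tendsto (fun k : ℕ => ((p : ℚ_[p]) ^ k) • x) atTop (nhds 0) := by
      have : Tendsto (fun k : ℕ => (p : ℚ_[p]) ^ k) atTop (nhds 0) :=
        tendsto_pow_atTop_nhds_zero_of_norm_lt_one Padic.norm_p_lt_one
      simpa using this.smul_const x
    obtain ⟨k, hk⟩ := (htendx.eventually_mem (hZo.mem_nhds Z.zero_mem)).exists
      
    have : ((p : ℚ_[p]) ^ k) • x ∈ F := hZF hk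
    have := F.smul_mem ((p : ℚ_[p]) ^ k)⁻¹ this
    rwa [inv_smul_smul₀ (pow_ne_zero _ hp0)] at this
  have : (⊤ : Submodule ℚ_[p] Q).FG := ⟨t, by rw [← hF, hFtop]⟩
  exact Module.finite_def.mpr this

lemma aux_key [T2Space Q] (Z : AddSubgroup Q) (hZc : IsCompact (Z : Set Q))
    (hZo : IsOpen (Z : Set Q)) :
    ∃ n : ℕ, ∃ φ : Q ≃+ (Fin n → ℚ_[p]), Continuous φ ∧ Continuous φ.symm ∧
      ∀ x : Q, x ∈ Z ↔ ∀ i, ‖φ x i‖ ≤ 1 := by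
  haveI := aux_fd (p := p) Z hZc hZo
  have hp0 : (p : ℚ_[p]) ≠ 0 := by
    exact_mod_cast (Nat.cast_ne_zero (R := ℚ_[p])).mpr (Fact.out : p.Prime).ne_zero
  letI : Module ℤ_[p] Q := Module.compHom Q (algebraMap ℤ_[p] ℚ_[p])
  have hsmulZ : ∀ (a : ℤ_[p]) (y : Q), a • y = (a : ℚ_[p]) • y := fun _ _ => rfl
  haveI : IsScalarTower ℤ_[p] ℚ_[p] Q := ⟨fun a c x => by
    rw [hsmulZ, Algebra.smul_def, PadicInt.algebraMap_apply, mul_smul]⟩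
  -- Z is stable under ℤ_p
  have hZsmul : ∀ (a : ℤ_[p]), ∀ x ∈ Z, a • x ∈ Z := by
    intro a x hx
    have hZcl : IsClosed (Z : Set Q) := hZc.isClosed
    have hcont : Continuous fun c : ℤ_[p] => ((c : ℚ_[p]) • x : Q) :=
      (continuous_subtype_val).smul continuous_const
    have hclosed : IsClosed {c : ℤ_[p] | (c : ℚ_[p]) • x ∈ Z} := hZcl.preimage hcont
    have hint : ∀ n : ℤ, (n : ℤ_[p]) ∈ {c : ℤ_[p] | (c : ℚ_[p]) • x ∈ Z} := by
      intro n
      show ((n : ℤ_[p]) : ℚ_[p]) • x ∈ Z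
      have h0 : (((n : ℤ_[p]) : ℚ_[p])) • x = n • x := by
        push_cast
        exact Int.cast_smul_eq_zsmul _ n x
      rw [h0]
      exact Z.zsmul_mem hx n
    have huniv : {c : ℤ_[p] | (c : ℚ_[p]) • x ∈ Z} = Set.univ := by
      have h1 : closure (Set.range ((Int.cast : ℤ → ℤ_[p]))) = Set.univ :=
        PadicInt.denseRange_intCast.closure_range
      have h2 : Set.range ((Int.cast : ℤ → ℤ_[p])) ⊆ {c : ℤ_[p] | (c : ℚ_[p]) • x ∈ Z} := by
        rintro _ ⟨n, rfl⟩; exact hint n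
      have := closure_mono h2
      rw [h1, hclosed.closure_eq] at this
      exact Set.eq_univ_of_univ_subset this
    rw [hsmulZ]
    have : a ∈ {c : ℤ_[p] | (c : ℚ_[p]) • x ∈ Z} := huniv ▸ Set.mem_univ a
    exact this
  let M : Submodule ℤ_[p] Q :=
    { carrier := Z
      add_mem' := fun ha hb => Z.add_mem ha hb
      zero_mem' := Z.zero_mem
      smul_mem' := fun a x hx => hZsmul a x hx }
  -- basis of Q over ℚ_p, its ℤ_p-span Λ is open
  let w : Module.Basis (Fin (Module.finrank ℚ_[p] Q)) ℚ_[p] Q := Module.finBasis ℚ_[p] Q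
  have hw_indZ : LinearIndependent ℤ_[p] ⇑w :=
    (LinearIndependent.iff_fractionRing ℤ_[p] ℚ_[p]).mpr w.linearIndependent
  have hrange_alg : ∀ y : ℚ_[p], y ∈ Set.range (algebraMap ℤ_[p] ℚ_[p]) ↔ ‖y‖ ≤ 1 := by
    intro y
    constructor
    · rintro ⟨c, rfl⟩; rw [PadicInt.algebraMap_apply]; exact c.2
    · intro hy; exact ⟨⟨y, hy⟩, rfl⟩
  set Λ : Submodule ℤ_[p] Q := Submodule.span ℤ_[p] (Set.range ⇑w) with hΛ
  have hΛmem : ∀ x : Q, x ∈ Λ ↔ ∀ i, ‖w.repr x i‖ ≤ 1 := by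
    intro x
    rw [hΛ, Module.Basis.mem_span_iff_repr_mem]
    exact forall_congr' fun i => hrange_alg _
  have hreprcont : ∀ i, Continuous fun x : Q => w.repr x i := by
    intro i
    have h1 : Continuous ⇑w.equivFun := w.equivFun.toLinearMap.continuous_of_finiteDimensional
    have := (continuous_apply i).comp h1
    simpa [Module.Basis.equivFun_apply, Function.comp_def] using this
  have hΛo : IsOpen (Λ : Set Q) := by
    have : (Λ : Set Q) = ⋂ i, (fun x : Q => w.repr x i) ⁻¹' (closedBall 0 1) := by
      ext x
      simp only [Set.mem_iInter, Set.mem_preimage, mem_closedBall_zero_iff]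
      exact hΛmem x
    rw [this]
    exact isOpen_iInter_of_finite fun i =>
      (IsUltrametricDist.isOpen_closedBall _ one_ne_zero).preimage (hreprcont i)
  -- scale Z into Λ
  obtain ⟨b, hbZΛ⟩ := aux_pow_smul (p := p) hZc (hΛo.mem_nhds Λ.zero_mem)
  let e₁ : Q ≃ₗ[ℚ_[p]] Q := LinearEquiv.smulOfNeZero ℚ_[p] Q ((p : ℚ_[p]) ^ b)
    (pow_ne_zero _ hp0)
  let μ : Q →ₗ[ℤ_[p]] Q :=
    { toFun := fun x => ((p : ℚ_[p]) ^ b) • x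
      map_add' := fun x y => smul_add _ x y
      map_smul' := fun a x => by
        simp only [RingHom.id_apply]
        rw [hsmulZ, hsmulZ, smul_smul, smul_smul, mul_comm] }
  let N : Submodule ℤ_[p] Q := M.map μ
  have hNΛ : N ≤ Λ := by
    rintro _ ⟨x, hx, rfl⟩
    exact hbZΛ x hx
  obtain ⟨m, bN⟩ := Submodule.basisOfPidOfLESpan hw_indZ hNΛ
  let v : Fin m → Q := fun i => (bN i : Q)
  have hvN : ∀ i, v i ∈ N := fun i => (bN i).2
  have hv_indZ : LinearIndependent ℤ_[p] v :=
    bN.linearIndependent.map' N.subtype N.ker_subtype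
  have hv_ind : LinearIndependent ℚ_[p] v :=
    (LinearIndependent.iff_fractionRing ℤ_[p] ℚ_[p]).mp hv_indZ
  -- N = ℤ_p-span of v
  have hNspan : N = Submodule.span ℤ_[p] (Set.range v) := by
    apply le_antisymm
    · intro y hy
      have h1 : (⟨y, hy⟩ : N) ∈ (⊤ : Submodule ℤ_[p] N) := Submodule.mem_top
      rw [← bN.span_eq] at h1
      have h2 := Submodule.mem_map_of_mem (f := N.subtype) h1
      rw [Submodule.map_span] at h2
      have h3 : N.subtype '' Set.range ⇑bN = Set.range v := by
        rw [← Set.range_comp]; rfl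
      rwa [h3] at h2
    · rw [Submodule.span_le]
      rintro _ ⟨i, rfl⟩
      exact hvN i
  -- v spans Q over ℚ_p
  have hvtop : ⊤ ≤ Submodule.span ℚ_[p] (Set.range v) := by
    rw [← w.span_eq]
    rw [Submodule.span_le]
    rintro _ ⟨j, rfl⟩
    -- find k with p^k • w j ∈ Z
    have htendx : Tendsto (fun k : ℕ => ((p : ℚ_[p]) ^ k) • w j) atTop (nhds 0) := by
      have : Tendsto (fun k : ℕ => (p : ℚ_[p]) ^ k) atTop (nhds 0) :=
        tendsto_pow_atTop_nhds_zero_of_norm_lt_one Padic.norm_p_lt_one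
      simpa using this.smul_const (w j)
    obtain ⟨k, hk⟩ := (htendx.eventually_mem (hZo.mem_nhds Z.zero_mem)).exists
    have h1 : ((p : ℚ_[p]) ^ b) • (((p : ℚ_[p]) ^ k) • w j) ∈ N :=
      ⟨((p : ℚ_[p]) ^ k) • w j, hk, rfl⟩
    rw [hNspan] at h1
    have h2 : ((p : ℚ_[p]) ^ b) • (((p : ℚ_[p]) ^ k) • w j) ∈
        Submodule.span ℚ_[p] (Set.range v) :=
      Submodule.span_subset_span ℤ_[p] ℚ_[p] _ h1
    have h3 := Submodule.smul_mem _ (((p : ℚ_[p]) ^ (b + k))⁻¹) h2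
    rw [smul_smul, smul_smul] at h3
    have h4 : ((p : ℚ_[p]) ^ (b + k))⁻¹ * (p : ℚ_[p]) ^ b * (p : ℚ_[p]) ^ k = 1 := by
      rw [pow_add]
      field_simp
    rwa [h4, one_smul] at h3
  let B : Module.Basis (Fin m) ℚ_[p] Q := Module.Basis.mk hv_ind hvtop
  have hBv : ⇑B = v := by
    funext i; exact Module.Basis.mk_apply hv_ind hvtop i
  -- membership in N via coordinates
  have hNrepr : ∀ y : Q, y ∈ N ↔ ∀ i, ‖B.repr y i‖ ≤ 1 := by
    intro y
    have := B.mem_span_iff_repr_mem ℤ_[p] y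
    rw [hBv, ← hNspan] at this
    rw [this]
    exact forall_congr' fun i => hrange_alg _
  -- final equivalence
  refine ⟨m, (e₁.trans B.equivFun).toAddEquiv, ?_, ?_, ?_⟩
  · exact (e₁.trans B.equivFun).toLinearMap.continuous_of_finiteDimensional
  · exact (e₁.trans B.equivFun).symm.toLinearMap.continuous_of_finiteDimensional
  · intro x
    have hx1 : x ∈ Z ↔ μ x ∈ N := by
      constructor
      · intro hx; exact ⟨x, hx, rfl⟩
      · rintro ⟨y, hy, hyx⟩
        have heq : ((p : ℚ_[p]) ^ b) • y = ((p : ℚ_[p]) ^ b) • x := hyx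
        have hyx' : y = x := by
          have := congrArg (fun z : Q => (((p : ℚ_[p]) ^ b)⁻¹) • z) heq
          simpa [inv_smul_smul₀ (pow_ne_zero _ hp0)] using this
        rwa [← hyx']
    rw [hx1, hNrepr]
    apply forall_congr'
    intro i
    have : (e₁.trans B.equivFun).toAddEquiv x i = B.repr (μ x) i := by
      show B.equivFun (e₁ x) i = (B.repr (μ x)) i
      rw [Module.Basis.equivFun_apply]
      rfl
    rw [this]

end Aux

section Glue
variable {ι : Type*} {G G' : ι → Type*} [∀ i, AddCommGroup (G i)] [∀ i, AddCommGroup (G' i)]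
  [∀ i, TopologicalSpace (G i)] [∀ i, TopologicalSpace (G' i)]
  {H : (i : ι) → AddSubgroup (G i)} {H' : (i : ι) → AddSubgroup (G' i)}

/-- The isomorphism of restricted products induced by coordinatewise isomorphisms. -/
def auxEquiv (φ : (i : ι) → G i ≃+ G' i) (hH : ∀ i x, x ∈ H i ↔ φ i x ∈ H' i) :
    RestrictedProductAdd G H ≃+ RestrictedProductAdd G' H' where
  toFun x := ⟨fun i => φ i (x.1 i), by
    have hx : ∀ᶠ i in cofinite, x.1 i ∈ H i := x.2
    exact hx.mono fun i h => (hH i _).mp h⟩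
  invFun y := ⟨fun i => (φ i).symm (y.1 i), by
    have hy : ∀ᶠ i in cofinite, y.1 i ∈ H' i := y.2
    refine hy.mono fun i h => ?_
    rw [hH i ((φ i).symm (y.1 i)), AddEquiv.apply_symm_apply]
    exact h⟩
  left_inv x := by
    apply Subtype.ext
    funext i
    exact (φ i).symm_apply_apply _
  right_inv y := by
    apply Subtype.ext
    funext i
    exact (φ i).apply_symm_apply _
  map_add' x y := by
    apply Subtype.ext
    funext i
    exact map_add (φ i) _ _

lemma auxEquiv_cont (φ : (i : ι) → G i ≃+ G' i) (hH : ∀ i x, x ∈ H i ↔ φ i x ∈ H' i)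
    (hc : ∀ i, Continuous (φ i)) : Continuous (auxEquiv φ hH) := by
  rw [continuous_generateFrom_iff]
  rintro s ⟨U, hUo, hUH, rfl⟩
  have hpre : ⇑(auxEquiv φ hH) ⁻¹' (RestrictedProductAdd.val G' H' ⁻¹' Set.pi univ U) =
      RestrictedProductAdd.val G H ⁻¹' Set.pi univ (fun i => ⇑(φ i) ⁻¹' U i) := by
    ext x
    simp only [Set.mem_preimage, Set.mem_pi, Set.mem_univ, forall_true_left]
    rfl
  rw [hpre]
  apply TopologicalSpace.isOpen_generateFrom_of_mem
  refine ⟨fun i => ⇑(φ i) ⁻¹' U i, fun i => (hUo i).preimage (hc i), ?_, rfl⟩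
  refine hUH.mono fun i hi => ?_
  show ⇑(φ i) ⁻¹' U i = _
  rw [hi]
  ext x
  simp only [Set.mem_preimage, SetLike.mem_coe]
  exact (hH i x).symm

lemma auxEquiv_symm (φ : (i : ι) → G i ≃+ G' i) (hH : ∀ i x, x ∈ H i ↔ φ i x ∈ H' i)
    (hH' : ∀ i y, y ∈ H' i ↔ (φ i).symm y ∈ H i) :
    (auxEquiv φ hH).symm = auxEquiv (fun i => (φ i).symm) hH' := rfl

end Glue


/-- If `(Q_q)_{q∈Σ}` is a family of LCA groups, each a topological vector space
over `ℚ_q`, and `Z_q` is a compact open subgroup of `Q_q`, then there are nonnegative integers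
`n_q` such that `∏'_{q∈Σ}(Q_q, Z_q)` is isomorphic as a topological group to
`∏'_{q∈Σ}(ℚ_q^{n_q}, ℤ_q^{n_q})`; in particular the restricted product does not depend on the
choice of the compact open subgroups. -/
theorem stmt_8 (P : Set Nat.Primes) (Q : ↥P → Type*) [∀ q, AddCommGroup (Q q)]
    [∀ q, TopologicalSpace (Q q)] [∀ q, IsTopologicalAddGroup (Q q)]
    [∀ q, LocallyCompactSpace (Q q)] [∀ q, T2Space (Q q)]
    [∀ q : ↥P, Module ℚ_[(q.1 : ℕ)] (Q q)] [∀ q : ↥P, ContinuousSMul ℚ_[(q.1 : ℕ)] (Q q)]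
    (Z : (q : ↥P) → AddSubgroup (Q q)) (hZc : ∀ q, IsCompact (Z q : Set (Q q)))
    (hZo : ∀ q, IsOpen (Z q : Set (Q q))) :
    ∃ n : ↥P → ℕ, ∃ e : RestrictedProductAdd Q Z ≃+ PadicRestrictedProduct P n,
      Continuous ⇑e ∧ Continuous ⇑e.symm := by
  have h := fun q : ↥P => aux_key (p := (q.1 : ℕ)) (Z q) (hZc q) (hZo q)
  choose n φ hφc hφc' hφZ using h
  refine ⟨n, ?_⟩
  have hH : ∀ (q : ↥P) (x : Q q), x ∈ Z q ↔
      φ q x ∈ AddSubgroup.pi Set.univ (fun _ => padicIntAddSubgroup q.1) := by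
    intro q x
    rw [hφZ q x, AddSubgroup.mem_pi]
    exact ⟨fun h i _ => h i, fun h i => h i (Set.mem_univ i)⟩
  have hH' : ∀ (q : ↥P) (y : Fin (n q) → ℚ_[(q.1 : ℕ)]),
      y ∈ AddSubgroup.pi Set.univ (fun _ => padicIntAddSubgroup q.1) ↔
        (φ q).symm y ∈ Z q := by
    intro q y
    rw [hH q ((φ q).symm y), AddEquiv.apply_symm_apply]
  refine ⟨auxEquiv φ hH, auxEquiv_cont φ hH hφc, ?_⟩
  rw [auxEquiv_symm φ hH (hH')]
  exact auxEquiv_cont _ _ hφc'
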